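/- Let α ∈ K. Then α is a normal element of K/F (i.e., the family (g(α))_{g ∈ G} is a basis of K as an F-vector space) if and only if the matrix M ∈ Matrix G G K with entries M(g,h) = (g·h)(α) (the Galois automorphism g·h applied to α) is invertible. -/

import Mathlib

/-- α ∈ K is a normal element of the finite Galois extension K/F
(i.e. the family (g α)_{g ∈ G} is an F-basis of K) iff the matrix
M(g,h) = (g·h)(α) over K is invertible. -/
theorem orbit_basis_iff_matrix_isUnit
    (F K : Type*) [Field F] [Field K] [CharZero F] [Algebra F K]
    [FiniteDimensional F K] [IsGalois F K]
    [Fintype (K ≃ₐ[F] K)] [DecidableEq (K ≃ₐ[F] K)] (α : K) :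
    (∃ b : Module.Basis (K ≃ₐ[F] K) F K, ∀ g : K ≃ₐ[F] K, b g = g α) ↔
      IsUnit (Matrix.of fun g h : K ≃ₐ[F] K => (g * h) α) := by
  set M : Matrix (K ≃ₐ[F] K) (K ≃ₐ[F] K) K :=
    Matrix.of fun g h : K ≃ₐ[F] K => (g * h) α with hM
  rw [Matrix.isUnit_iff_isUnit_det, isUnit_iff_ne_zero]
  constructor
  · rintro ⟨b, hb⟩ hdet
    obtain ⟨v, hv, hvM⟩ := Matrix.exists_vecMul_eq_zero_iff.2 hdet
    -- linear independence of characters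
    have hinj : Function.Injective
        (fun g : K ≃ₐ[F] K => MonoidHomClass.toMonoidHom g) := by
      intro g g' h
      ext x
      exact DFunLike.congr_fun h x
    have hli : LinearIndependent K
        (fun g : K ≃ₐ[F] K => ((MonoidHomClass.toMonoidHom g : K →* K) : K → K)) :=
      (linearIndependent_monoidHom K K).comp _ hinj
    have hzero : ∑ g : K ≃ₐ[F] K,
        v g • ((MonoidHomClass.toMonoidHom g : K →* K) : K → K) = 0 := by
      funext x
      have hx : x = ∑ h : K ≃ₐ[F] K, b.repr x h • b h := (b.sum_repr x).symm
      simp only [Finset.sum_apply, Pi.smul_apply, Pi.zero_apply,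
        MonoidHom.coe_coe, smul_eq_mul]
      calc ∑ g : K ≃ₐ[F] K, v g * g x
          = ∑ g : K ≃ₐ[F] K, v g * g (∑ h : K ≃ₐ[F] K, b.repr x h • b h) := by
            rw [← hx]
        _ = ∑ g : K ≃ₐ[F] K, ∑ h : K ≃ₐ[F] K,
              b.repr x h • (v g * (g * h) α) := by
            refine Finset.sum_congr rfl fun g _ => ?_
            rw [map_sum, Finset.mul_sum]
            refine Finset.sum_congr rfl fun h _ => ?_
            rw [hb h, map_smul, AlgEquiv.mul_apply]
            rw [Algebra.smul_def, Algebra.smul_def]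
            ring
        _ = ∑ h : K ≃ₐ[F] K, b.repr x h • ∑ g : K ≃ₐ[F] K, v g * (g * h) α := by
            rw [Finset.sum_comm]
            exact Finset.sum_congr rfl fun h _ => (Finset.smul_sum).symm
        _ = 0 := by
            refine Finset.sum_eq_zero fun h _ => ?_
            have := congrFun hvM h
            simp only [Matrix.vecMul, dotProduct, hM, Matrix.of_apply,
              Pi.zero_apply] at this
            rw [this, smul_zero]
    have := Fintype.linearIndependent_iff.1 hli v hzero
    exact hv (funext this)
  · intro hdet
    have hli : LinearIndependent F (fun g : K ≃ₐ[F] K => g α) := by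
      rw [Fintype.linearIndependent_iff]
      intro c hc
      set w : (K ≃ₐ[F] K) → K := fun g => algebraMap F K (c g) with hw
      have hMw : M.mulVec w = 0 := by
        funext h
        simp only [Matrix.mulVec, dotProduct, hM, Matrix.of_apply, hw,
          Pi.zero_apply]
        have : (h : K ≃ₐ[F] K) (∑ g : K ≃ₐ[F] K, c g • g α) = 0 := by
          rw [hc, map_zero]
        rw [map_sum] at this
        rw [← this]
        refine Finset.sum_congr rfl fun g _ => ?_
        rw [map_smul, AlgEquiv.mul_apply, Algebra.smul_def]
        ring
      have hw0 : w = 0 := by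
        by_contra hw0
        exact hdet (Matrix.exists_mulVec_eq_zero_iff.1 ⟨w, hw0, hMw⟩)
      intro g
      have : algebraMap F K (c g) = 0 := congrFun hw0 g
      exact (algebraMap F K).injective (by simpa using this)
    have hcard : Fintype.card (K ≃ₐ[F] K) = Module.finrank F K := by
      have h := IsGalois.card_aut_eq_finrank F K
      rwa [Nat.card_eq_fintype_card] at h
    refine ⟨basisOfLinearIndependentOfCardEqFinrank hli hcard, fun g => ?_⟩
    rw [coe_basisOfLinearIndependentOfCardEqFinrank]
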